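/- arXiv:1008.3626 — 5 statements merged into one kernel-verified Lean document; each statement's English description precedes it below -/
import Mathlib

section
/- If |k| ≤ tan β − σ with 0 < σ < tan β and β ∈ (0, π/2), then for any θ ∈ [−θ₀, θ₀] with θ₀ = π/2 − β, we have σ·cos β ≤ (1 ± k·tan θ)·cos θ ≤ 2 − σ·cot β. -/
open Real

theorem stmt_4 (β σ k θ : ℝ)
    (hβ : β ∈ Set.Ioo 0 (π / 2)) (hσ : σ ∈ Set.Ioo 0 (tan β))
    (hk : |k| ≤ tan β - σ)
    (hθ : θ ∈ Set.Icc (-(π / 2 - β)) (π / 2 - β)) :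
    (σ * cos β ≤ (1 + k * tan θ) * cos θ ∧ (1 + k * tan θ) * cos θ ≤ 2 - σ * (cos β / sin β)) ∧
    (σ * cos β ≤ (1 - k * tan θ) * cos θ ∧ (1 - k * tan θ) * cos θ ≤ 2 - σ * (cos β / sin β)) := by
  obtain ⟨hβ0, hβ2⟩ := hβ
  obtain ⟨hσ0, hσt⟩ := hσ
  obtain ⟨hθl, hθr⟩ := hθ
  have hpi := Real.pi_pos
  have hcβ : 0 < cos β := Real.cos_pos_of_mem_Ioo ⟨by linarith, hβ2⟩
  have hsβ : 0 < sin β := Real.sin_pos_of_pos_of_lt_pi hβ0 (by linarith)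
  have hsβ1 : sin β < 1 := by
    nlinarith [Real.sin_sq_add_cos_sq β, mul_pos hcβ hcβ]
  have htan : tan β = sin β / cos β := Real.tan_eq_sin_div_cos β
  have habs : |θ| ≤ π / 2 - β := abs_le.mpr ⟨hθl, hθr⟩
  -- cos θ ≥ sin β
  have hcθ : sin β ≤ cos θ := by
    have h1 : cos (π / 2 - β) ≤ cos |θ| :=
      Real.cos_le_cos_of_nonneg_of_le_pi (abs_nonneg θ) (by linarith) habs
    rw [Real.cos_pi_div_two_sub, Real.cos_abs] at h1
    exact h1
  have hcθ0 : 0 < cos θ := lt_of_lt_of_le hsβ hcθ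
  have hc1 : cos θ ≤ 1 := Real.cos_le_one θ
  -- |sin θ| ≤ cos β
  have hsθ : |sin θ| ≤ cos β := by
    have h0 : |sin θ| = sin |θ| := by
      rcases abs_cases θ with ⟨h1, h2⟩ | ⟨h1, h2⟩
      · rw [h1]
        exact abs_of_nonneg (Real.sin_nonneg_of_nonneg_of_le_pi h2 (by linarith))
      · rw [h1, Real.sin_neg]
        have : sin θ ≤ 0 := by
          have := Real.sin_nonneg_of_nonneg_of_le_pi (x := -θ) (by linarith) (by linarith)
          rw [Real.sin_neg] at this; linarith
        rw [abs_of_nonpos this]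
    rw [h0, ← Real.cos_pi_div_two_sub]
    exact Real.cos_le_cos_of_nonneg_of_le_pi (by linarith) (by
      have := abs_nonneg θ; linarith) (by linarith)
  have hkb : |k * sin θ| ≤ sin β - σ * cos β := by
    rw [abs_mul]
    calc |k| * |sin θ| ≤ (tan β - σ) * cos β := by
          apply mul_le_mul hk hsθ (abs_nonneg _) (le_trans (abs_nonneg k) hk)
      _ = sin β - σ * cos β := by rw [htan]; field_simp
  have hks1 : -(sin β - σ * cos β) ≤ k * sin θ := neg_le_of_abs_le hkb
  have hks2 : k * sin θ ≤ sin β - σ * cos β := le_of_abs_le hkb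
  have hexp : (1 + k * tan θ) * cos θ = cos θ + k * sin θ := by
    rw [Real.tan_eq_sin_div_cos]; field_simp
  have hexp2 : (1 - k * tan θ) * cos θ = cos θ - k * sin θ := by
    rw [Real.tan_eq_sin_div_cos]; field_simp
  have hcot : σ * (cos β / sin β) ≤ 1 := by
    have hσc : σ * cos β ≤ sin β := by
      rw [htan, lt_div_iff₀ hcβ] at hσt
      linarith
    have h : σ * (cos β / sin β) = σ * cos β / sin β := by ring
    rw [h, div_le_one hsβ]
    linarith
  have hupper : cos θ + (sin β - σ * cos β) ≤ 2 - σ * (cos β / sin β) := by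
    have h1 : σ * (cos β / sin β) * (1 - sin β) ≤ 1 * (1 - sin β) := by
      apply mul_le_mul_of_nonneg_right hcot (by linarith)
    have h2 : σ * (cos β / sin β) * sin β = σ * cos β := by
      field_simp
    nlinarith
  rw [hexp, hexp2]
  refine ⟨⟨by linarith, by linarith⟩, ⟨by linarith, by linarith⟩⟩
end

section
/- Let β ∈ (0, π/2), σ ∈ (0, tan β), θ₀ = π/2 − β. Suppose ω' ∈ ℝ and θ ∈ [−θ₀, θ₀] satisfy cos θ + ω'·sin θ > 0 and −(tan β − σ) ≤ (ω'·cos θ − sin θ)/(cos θ + ω'·sin θ) ≤ tan β − σ. Then |ω'| ≤ (1 + tan β − σ)/(σ·cos β). -/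
open Real

set_option maxHeartbeats 1000000 in
theorem stmt_6 (β σ ω' θ : ℝ)
    (hβ : β ∈ Set.Ioo 0 (π / 2)) (hσ : σ ∈ Set.Ioo 0 (tan β))
    (hθ : θ ∈ Set.Icc (-(π / 2 - β)) (π / 2 - β))
    (hpos : 0 < cos θ + ω' * sin θ)
    (hlo : -(tan β - σ) ≤ (ω' * cos θ - sin θ) / (cos θ + ω' * sin θ))
    (hhi : (ω' * cos θ - sin θ) / (cos θ + ω' * sin θ) ≤ tan β - σ) :
    |ω'| ≤ (1 + tan β - σ) / (σ * cos β) := by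
  obtain ⟨hβ0, hβ2⟩ := hβ
  obtain ⟨hσ0, hσt⟩ := hσ
  have hpi := Real.pi_pos
  have hcb : 0 < cos β := Real.cos_pos_of_mem_Ioo ⟨by linarith, hβ2⟩
  have hsb : 0 < sin β := Real.sin_pos_of_pos_of_lt_pi hβ0 (by linarith)
  have htan : tan β = sin β / cos β := Real.tan_eq_sin_div_cos β
  have hscb : σ * cos β < sin β := by
    have h := htan ▸ hσt
    exact (lt_div_iff₀ hcb).mp h
  set T := tan β - σ with hT
  have hT0 : 0 < T := by linarith
  set D := σ * cos β with hD
  have hD0 : 0 < D := by positivity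
  -- auxiliary inequality
  have aux : ∀ t : ℝ, 0 ≤ t → t ≤ π / 2 - β → D ≤ cos t - T * sin t := by
    intro t ht0 ht1
    have hst : 0 ≤ sin t := Real.sin_nonneg_of_nonneg_of_le_pi ht0 (by linarith)
    have hst1 : sin t ≤ 1 := Real.sin_le_one t
    have hct : sin β ≤ cos t := by
      have := Real.cos_le_cos_of_nonneg_of_le_pi ht0 (by linarith) ht1
      rwa [Real.cos_pi_div_two_sub] at this
    have hcadd : cos (t + β) = cos t * cos β - sin t * sin β := Real.cos_add t β
    have hcaddpos : 0 ≤ cos (t + β) :=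
      Real.cos_nonneg_of_mem_Icc ⟨by linarith, by linarith⟩
    -- goal times cos β: σ cos²β ≤ cos(t+β) + σ cos β sin t
    have key : σ * cos β * cos β ≤ cos (t + β) + σ * cos β * sin t := by
      rcases le_or_gt (cos β) (sin t) with h | h
      · nlinarith
      · nlinarith [mul_nonneg (sub_nonneg.mpr hscb.le) (sub_nonneg.mpr h.le)]
    have hTcb : T * cos β = sin β - σ * cos β := by
      rw [hT, htan]; field_simp
    have h2 : 0 ≤ cos β * (cos t - T * sin t - σ * cos β) := by nlinarith [key, hcadd, hTcb]
    rw [hD]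
    nlinarith [h2, hcb]
  -- bounds from aux for both signs
  have habs : D ≤ cos θ - T * |sin θ| := by
    rcases le_or_gt 0 θ with h | h
    · have hs : 0 ≤ sin θ := Real.sin_nonneg_of_nonneg_of_le_pi h (by linarith [hθ.2])
      rw [abs_of_nonneg hs]; exact aux θ h hθ.2
    · have h1 : 0 ≤ -θ := by linarith
      have hs : 0 ≤ sin (-θ) := Real.sin_nonneg_of_nonneg_of_le_pi h1 (by linarith [hθ.1])
      rw [Real.sin_neg] at hs
      rw [abs_of_nonpos (by linarith)]
      have := aux (-θ) h1 (by linarith [hθ.1])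
      rw [Real.cos_neg, Real.sin_neg, mul_neg, sub_neg_eq_add] at this
      linarith
  have key1 : D ≤ cos θ - T * sin θ := by
    have := le_abs_self (sin θ); nlinarith
  have key2 : D ≤ cos θ + T * sin θ := by
    have := neg_abs_le (sin θ); nlinarith
  -- translate fraction bounds
  have hhi' : ω' * cos θ - sin θ ≤ T * (cos θ + ω' * sin θ) :=
    (div_le_iff₀ hpos).mp hhi
  have hlo' : -(T * (cos θ + ω' * sin θ)) ≤ ω' * cos θ - sin θ := by
    have := (le_div_iff₀ hpos).mp hlo
    linarith
  have hs1 : sin θ ≤ 1 := Real.sin_le_one θ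
  have hs2 : -1 ≤ sin θ := Real.neg_one_le_sin θ
  have hc1 : cos θ ≤ 1 := Real.cos_le_one θ
  have hbound : |ω'| * D ≤ 1 + T := by
    have e2 : T * cos θ ≤ T := by nlinarith
    rcases le_or_gt 0 ω' with h | h
    · rw [abs_of_nonneg h]
      have e1 : ω' * D ≤ ω' * (cos θ - T * sin θ) := mul_le_mul_of_nonneg_left key1 h
      nlinarith [hhi', e1, e2]
    · rw [abs_of_neg h]
      have e1 : ω' * (cos θ + T * sin θ) ≤ ω' * D := mul_le_mul_of_nonpos_left key2 h.le
      nlinarith [hlo', e1, e2]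
  rw [le_div_iff₀ (by positivity : (0:ℝ) < σ * cos β)]
  rw [hD, hT] at hbound
  linarith [hbound]
end

section
/- Let β ∈ (0, π/2), σ ∈ (0, tan β), θ₀ = π/2 − β. Suppose ω' ∈ ℝ and θ ∈ [−θ₀, θ₀] satisfy cos θ + ω'·sin θ > 0 and |(ω'·cos θ − sin θ)/(cos θ + ω'·sin θ)| ≤ tan β − σ. Then cos θ + ω'·sin θ ≥ 1/(2 − σ·cot β). -/
set_option maxHeartbeats 1000000

open Real

theorem stmt_7 (β σ ω' θ : ℝ)
    (hβ : β ∈ Set.Ioo 0 (π / 2)) (hσ : σ ∈ Set.Ioo 0 (tan β))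
    (hθ : θ ∈ Set.Icc (-(π / 2 - β)) (π / 2 - β))
    (hpos : 0 < cos θ + ω' * sin θ)
    (hslope : |(ω' * cos θ - sin θ) / (cos θ + ω' * sin θ)| ≤ tan β - σ) :
    1 / (2 - σ * (cos β / sin β)) ≤ cos θ + ω' * sin θ := by
  obtain ⟨hβ0, hβ2⟩ := hβ
  obtain ⟨hσ0, hσt⟩ := hσ
  obtain ⟨hθ1, hθ2⟩ := hθ
  have hc : 0 < Real.cos β := Real.cos_pos_of_mem_Ioo ⟨by linarith [Real.pi_pos], hβ2⟩
  have hs : 0 < Real.sin β := Real.sin_pos_of_pos_of_lt_pi hβ0 (by linarith [Real.pi_pos])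
  have hs1 : Real.sin β ≤ 1 := Real.sin_le_one β
  have htan : Real.tan β = Real.sin β / Real.cos β := Real.tan_eq_sin_div_cos β
  have hσc : σ * (Real.cos β / Real.sin β) < 1 := by
    rw [htan, lt_div_iff₀ hc] at hσt
    have : σ * (Real.cos β / Real.sin β) = σ * Real.cos β / Real.sin β := by ring
    rw [this, div_lt_iff₀ hs]
    linarith
  have hD : 0 < 2 - σ * (Real.cos β / Real.sin β) := by linarith
  -- |sin θ| ≤ cos β
  have hmono := Real.strictMonoOn_sin.monotoneOn
  have hβπ : π / 2 - β ≤ π / 2 := by linarith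
  have hsth : Real.sin θ ≤ Real.cos β := by
    have := hmono (Set.mem_Icc.mpr ⟨by linarith, by linarith⟩)
      (Set.mem_Icc.mpr ⟨by linarith, by linarith⟩) hθ2
    rwa [Real.sin_pi_div_two_sub] at this
  have hsth2 : -(Real.cos β) ≤ Real.sin θ := by
    have := hmono (Set.mem_Icc.mpr ⟨by linarith, by linarith⟩)
      (Set.mem_Icc.mpr ⟨by linarith, by linarith⟩) hθ1
    rw [Real.sin_neg, Real.sin_pi_div_two_sub] at this
    linarith
  have habs : |Real.sin θ| ≤ Real.cos β := abs_le.mpr ⟨hsth2, hsth⟩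
  -- bound on numerator
  have hN : |ω' * Real.cos θ - Real.sin θ| ≤ (Real.tan β - σ) * (Real.cos θ + ω' * Real.sin θ) := by
    rw [abs_div] at hslope
    rw [abs_of_pos hpos, div_le_iff₀ hpos] at hslope
    exact hslope
  have htσ : 0 < Real.tan β - σ := by linarith
  have hprod : |(ω' * Real.cos θ - Real.sin θ) * Real.sin θ|
      ≤ (Real.tan β - σ) * (Real.cos θ + ω' * Real.sin θ) * Real.cos β := by
    rw [abs_mul]
    exact mul_le_mul hN habs (abs_nonneg _) (by positivity)
  have hkey : -((ω' * Real.cos θ - Real.sin θ) * Real.sin θ)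
      ≤ (Real.tan β - σ) * (Real.cos θ + ω' * Real.sin θ) * Real.cos β :=
    le_trans (neg_le_abs _) hprod
  have hone : Real.cos θ * Real.cos θ + Real.sin θ * Real.sin θ = 1 := by
    nlinarith [Real.sin_sq_add_cos_sq θ]
  have hcos1 : Real.cos θ ≤ 1 := Real.cos_le_one θ
  have htc : Real.tan β * Real.cos β = Real.sin β := by
    rw [htan]; field_simp
  rw [div_le_iff₀ hD]
  -- 1 ≤ J cos θ + (tan β − σ) J cos β = J (cos θ + sin β − σ cos β) ≤ J (2 − σ cot β)
  have e1 : (Real.cos θ + ω' * Real.sin θ) * Real.cos θ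
      - (ω' * Real.cos θ - Real.sin θ) * Real.sin θ = 1 := by linear_combination hone
  have e2 : (Real.cos θ + ω' * Real.sin θ) * Real.cos θ
      ≤ (Real.cos θ + ω' * Real.sin θ) * 1 :=
    mul_le_mul_of_nonneg_left hcos1 hpos.le
  have e3 : (Real.tan β - σ) * (Real.cos θ + ω' * Real.sin θ) * Real.cos β
      = (Real.cos θ + ω' * Real.sin θ) * (Real.sin β - σ * Real.cos β) := by
    linear_combination (Real.cos θ + ω' * Real.sin θ) * htc
  have e4 : (Real.cos θ + ω' * Real.sin θ) * (1 + Real.sin β - σ * Real.cos β)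
      = (Real.cos θ + ω' * Real.sin θ) * 1
        + (Real.cos θ + ω' * Real.sin θ) * (Real.sin β - σ * Real.cos β) := by ring
  have h1 : 1 ≤ (Real.cos θ + ω' * Real.sin θ) * (1 + Real.sin β - σ * Real.cos β) := by
    linarith [hkey, e1, e2, e3, e4]
  have h2 : (Real.cos θ + ω' * Real.sin θ) * (1 + Real.sin β - σ * Real.cos β)
      ≤ (Real.cos θ + ω' * Real.sin θ) * (2 - σ * (Real.cos β / Real.sin β)) := by
    have hcs : σ * Real.cos β = σ * (Real.cos β / Real.sin β) * Real.sin β := by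
      field_simp
    have hq : 1 + Real.sin β - σ * Real.cos β ≤ 2 - σ * (Real.cos β / Real.sin β) := by
      rw [hcs]
      nlinarith [mul_nonneg (sub_nonneg.mpr hσc.le) (sub_nonneg.mpr hs1)]
    exact mul_le_mul_of_nonneg_left hq hpos.le
  linarith
end

section
/- Fix t > 0 and let D(t) = ∫_{−ζ₁(t)}^{ζ₂(t)} √(2(T−t))·ψ(x/√(2(T−t))) dx − (1/2)(ζ₁(t)² + ζ₂(t)²) tan β, where ζᵢ(t) = qᵢ√(2(T−t)) and ψ solves a(ψ')ψ'' = zψ' − ψ on [−q₁, q₂] with ψ'(−q₁) = −γ₁, ψ(−q₁) = q₁ tan β, ψ'(q₂) = γ₂, ψ(q₂) = q₂ tan β. Then D'(t) = ∫_{−γ₁}^{γ₂} a(p) dp. -/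
open Real

theorem stmt_12 (a ψ : ℝ → ℝ) (T q₁ q₂ β γ₁ γ₂ : ℝ)
    (ha : Continuous a) (hapos : ∀ p, 0 < a p)
    (hT : 0 < T) (hq₁ : 0 < q₁) (hq₂ : 0 < q₂) (hβ : β ∈ Set.Ioo 0 (π / 2))
    (hγ : γ₁ + γ₂ < 0)
    (hψ : ContDiff ℝ 2 ψ)
    (hode : ∀ z ∈ Set.Icc (-q₁) q₂,
      a (deriv ψ z) * deriv (deriv ψ) z = z * deriv ψ z - ψ z)
    (hbc1 : deriv ψ (-q₁) = -γ₁) (hbc2 : ψ (-q₁) = q₁ * tan β)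
    (hbc3 : deriv ψ q₂ = γ₂) (hbc4 : ψ q₂ = q₂ * tan β)
    (D : ℝ → ℝ)
    (hD : ∀ t, D t =
      (∫ x in (-(q₁ * Real.sqrt (2 * (T - t))))..(q₂ * Real.sqrt (2 * (T - t))),
        Real.sqrt (2 * (T - t)) * ψ (x / Real.sqrt (2 * (T - t)))) -
      (1 / 2) * ((q₁ * Real.sqrt (2 * (T - t))) ^ 2 +
        (q₂ * Real.sqrt (2 * (T - t))) ^ 2) * tan β) :
    ∀ t, 0 ≤ t → t < T → deriv D t = ∫ p in (-γ₁)..γ₂, a p := by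
  intro t ht0 htT
  -- basic regularity facts
  have hψ1 : ContDiff ℝ 1 (deriv ψ) := by
    have h2 : ContDiff ℝ (1 + 1 : ℕ) ψ := by
      convert hψ using 2
      norm_num
    exact (contDiff_succ_iff_deriv.mp h2).2.2
  have hψc : Continuous ψ := hψ.continuous
  have hdψ : ∀ x : ℝ, HasDerivAt ψ (deriv ψ x) x := fun x =>
    ((hψ.differentiable (by norm_num)) x).hasDerivAt
  have hdψ' : ∀ x : ℝ, HasDerivAt (deriv ψ) (deriv (deriv ψ) x) x := fun x =>
    ((hψ1.differentiable one_ne_zero) x).hasDerivAt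
  have hψ'c : Continuous (deriv ψ) := hψ1.continuous
  have hψ''c : Continuous (deriv (deriv ψ)) := hψ1.continuous_deriv le_rfl
  have hle : -q₁ ≤ q₂ := le_trans (by linarith) hq₂.le
  have huIcc : Set.uIcc (-q₁) q₂ = Set.Icc (-q₁) q₂ := Set.uIcc_of_le hle
  set C : ℝ := (∫ z in (-q₁)..q₂, ψ z) - (1 / 2) * (q₁ ^ 2 + q₂ ^ 2) * tan β with hC
  -- Step B: the target integral equals -2C
  have hB : (∫ p in (-γ₁)..γ₂, a p) = -2 * C := by
    have hsub : (∫ z in (-q₁)..q₂, deriv (deriv ψ) z • a (deriv ψ z))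
        = ∫ p in (deriv ψ (-q₁))..(deriv ψ q₂), a p := by
      exact intervalIntegral.integral_comp_smul_deriv
        (fun x _ => hdψ' x) hψ''c.continuousOn ha
    rw [hbc1, hbc3] at hsub
    have hcongr : (∫ z in (-q₁)..q₂, deriv (deriv ψ) z • a (deriv ψ z))
        = ∫ z in (-q₁)..q₂, (z * deriv ψ z - ψ z) := by
      apply intervalIntegral.integral_congr
      intro z hz
      rw [huIcc] at hz
      simp only [smul_eq_mul]
      rw [mul_comm]
      exact hode z hz
    -- integration by parts for ∫ z ψ'
    have hF : ∀ x ∈ Set.uIcc (-q₁) q₂,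
        HasDerivAt (fun z => z * ψ z) (ψ x + x * deriv ψ x) x := by
      intro x _
      have := (hasDerivAt_id' x).mul (hdψ x)
      exact this.congr_deriv (by ring)
    have hFint : IntervalIntegrable (fun x => ψ x + x * deriv ψ x)
        MeasureTheory.volume (-q₁) q₂ :=
      (hψc.add (continuous_id.mul hψ'c)).intervalIntegrable _ _
    have hFTC : (∫ x in (-q₁)..q₂, (ψ x + x * deriv ψ x))
        = q₂ * ψ q₂ - (-q₁) * ψ (-q₁) :=
      intervalIntegral.integral_eq_sub_of_hasDerivAt hF hFint
    have hsplit : (∫ z in (-q₁)..q₂, (z * deriv ψ z - ψ z))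
        = (∫ x in (-q₁)..q₂, (ψ x + x * deriv ψ x)) - 2 * ∫ z in (-q₁)..q₂, ψ z := by
      have h1 : IntervalIntegrable ψ MeasureTheory.volume (-q₁) q₂ :=
        hψc.intervalIntegrable _ _
      have h2 : IntervalIntegrable (fun x => (2 : ℝ) * ψ x)
          MeasureTheory.volume (-q₁) q₂ :=
        (continuous_const.mul hψc).intervalIntegrable _ _
      have : (∫ z in (-q₁)..q₂, (z * deriv ψ z - ψ z))
          = ∫ z in (-q₁)..q₂, ((ψ z + z * deriv ψ z) - 2 * ψ z) := by
        congr 1; ext z; ring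
      rw [this, intervalIntegral.integral_sub (hFint) h2,
        intervalIntegral.integral_const_mul]
    rw [← hsub, hcongr, hsplit, hFTC, hbc2, hbc4, hC]
    ring
  -- Step A: D agrees with a linear function near t
  have hA : ∀ t' ∈ Set.Iio T, D t' = 2 * (T - t') * C := by
    intro t' ht'
    have hpos : (0 : ℝ) < 2 * (T - t') := by simp at ht'; linarith
    set s : ℝ := Real.sqrt (2 * (T - t')) with hs
    have hspos : 0 < s := Real.sqrt_pos.mpr hpos
    have hs2 : s ^ 2 = 2 * (T - t') := Real.sq_sqrt hpos.le
    have hint : (∫ x in (-(q₁ * s))..(q₂ * s), s * ψ (x / s))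
        = s ^ 2 * ∫ z in (-q₁)..q₂, ψ z := by
      rw [intervalIntegral.integral_const_mul,
        intervalIntegral.integral_comp_div (f := ψ) hspos.ne']
      have e1 : -(q₁ * s) / s = -q₁ := by field_simp
      have e2 : q₂ * s / s = q₂ := by field_simp
      rw [e1, e2, smul_eq_mul]
      ring
    rw [hD t', ← hs, hint, ← hs2, hC]
    ring
  -- conclude
  have hev : D =ᶠ[nhds t] fun t' => 2 * (T - t') * C :=
    Filter.eventuallyEq_of_mem (Iio_mem_nhds htT) hA
  have hderiv : HasDerivAt (fun t' => 2 * (T - t') * C) (-2 * C) t := by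
    have h : HasDerivAt (fun t' : ℝ => 2 * (T - t') * C) (2 * (0 - 1) * C) t := by
      exact (((hasDerivAt_const t T).sub (hasDerivAt_id t)).const_mul 2).mul_const C
    simpa using h
  rw [hev.deriv_eq, hderiv.deriv, hB]
end

section
/- Suppose b > 1, U is strictly increasing in t (U_t > 0), both U and U* satisfy the discrete self-similarity b⁻¹V(bx, b²t) = V(x,t), and the comparison property holds: if U*(·, t₁) ≤ U(·, t₂) pointwise with touching (denoted ⪯) and not identically equal, then U*(·, t₁ + τ) < U(·, t₂ + τ) for all τ > 0. If U*(x̄, t̄) = U(x̄, t̄) at some point with U*(·, t̄) ≢ U(·, t̄), and t̃ := inf{t : U*(·, t̄) < U(·, t)} satisfies t̃ ≥ t̄ and U*(·, t̄) ⪯ U(·, t̃), then the self-similarity gives U*(·, b²t̄) ⪯ U(·, b²t̃) while comparison gives U*(·, b²t̄) < U(·, t̃ + (b²−1)t̄), forcing b²t̃ < t̃ + (b²−1)t̄, i.e. t̃ < t̄ — a contradiction. Hence the expanding self-similar solution is unique. -/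
theorem stmt_17 (U Us : ℝ → ℝ → ℝ) (b tb tt : ℝ) (hb : 1 < b)
    (hmono : ∀ x t₁ t₂, 0 < t₁ → t₁ < t₂ → U x t₁ < U x t₂)
    (hssU : ∀ x t, 0 < t → b⁻¹ * U (b * x) (b ^ 2 * t) = U x t)
    (hssUs : ∀ x t, 0 < t → b⁻¹ * Us (b * x) (b ^ 2 * t) = Us x t)
    (hcomp : ∀ t₁ t₂, 0 < t₁ → 0 < t₂ →
      (∀ x, Us x t₁ ≤ U x t₂) → ¬(∀ x, Us x t₁ = U x t₂) →
      ∀ τ, 0 < τ → ∀ x, Us x (t₁ + τ) < U x (t₂ + τ))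
    (htb : 0 < tb) (htt : tb ≤ tt)
    (hle : ∀ x, Us x tb ≤ U x tt)
    (htouch : ∃ x, Us x tb = U x tt)
    (hnid : ¬(∀ x, Us x tb = U x tt)) :
    False := by
  obtain ⟨x0, hx⟩ := htouch
  have hb0 : (0:ℝ) < b := lt_trans one_pos hb
  have htt0 : 0 < tt := lt_of_lt_of_le htb htt
  have hτ : 0 < (b ^ 2 - 1) * tb := mul_pos (by nlinarith) htb
  have h1 := hcomp tb tt htb htt0 hle hnid _ hτ (b * x0)
  have hUs := hssUs x0 tb htb
  have hU := hssU x0 tt htt0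
  -- Us (b*x0) (b²*tb) = U (b*x0) (b²*tt)
  have hkey : Us (b * x0) (b ^ 2 * tb) = U (b * x0) (b ^ 2 * tt) := by
    have hbne : b ≠ 0 := ne_of_gt hb0
    field_simp at hUs hU
    rw [hUs, hU, hx]
  have hle2 : U (b * x0) (tt + (b ^ 2 - 1) * tb) ≤ U (b * x0) (b ^ 2 * tt) := by
    rcases eq_or_lt_of_le (show tt + (b ^ 2 - 1) * tb ≤ b ^ 2 * tt by nlinarith) with h | h
    · rw [h]
    · exact le_of_lt (hmono _ _ _ (by nlinarith) h)
  have : Us (b * x0) (b ^ 2 * tb) < U (b * x0) (b ^ 2 * tt) := by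
    have : tb + (b ^ 2 - 1) * tb = b ^ 2 * tb := by ring
    rw [this] at h1
    exact lt_of_lt_of_le h1 hle2
  rw [hkey] at this
  exact lt_irrefl _ this
end
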